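/- In the geometric-cost construction: for λ ≥ 2, actions indexed i = 0, 1, 2, … with cost c_i = Σ_{k=1}^{i} λ^k and expected reward R_i = c_i + i (with c_0 = 0, R_0 = 0), each breakpoint satisfies α_i = (c_{i+1} − c_i)/(R_{i+1} − R_i) = λ^{i+1}/(λ^{i+1} + 1), and the principal's linear-contract profit at each breakpoint is bounded by a constant: (1 − α_i) R_{i+1} = (i + 1 + Σ_{k=1}^{i+1} λ^k)/(λ^{i+1} + 1) ≤ 3 for all i ≥ 0. -/

import Mathlib

/-- Geometric-cost construction: with `λ ≥ 2`, costs `c_i = Σ_{k=1}^i λ^k` and rewards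
`R_i = c_i + i`, each breakpoint equals `λ^{i+1}/(λ^{i+1}+1)` and the linear-contract profit
at each breakpoint, `(1 − α_i) R_{i+1} = (i+1+Σ_{k=1}^{i+1} λ^k)/(λ^{i+1}+1)`, is at most 3. -/

lemma sum_geom_le (lam : ℝ) (hlam : 2 ≤ lam) (i : ℕ) :
    ∑ k ∈ Finset.Icc 1 (i + 1), lam ^ k ≤ 2 * lam ^ (i + 1) := by
  induction i with
  | zero => simp; nlinarith
  | succ n ih =>
    rw [Finset.sum_Icc_succ_top (by omega : 1 ≤ n + 1 + 1)]
    have h : lam ^ (n + 1 + 1) = lam * lam ^ (n + 1) := by ring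
    nlinarith [pow_pos (show (0:ℝ) < lam by linarith) (n + 1)]

theorem geometric_cost_breakpoints
    (lam : ℝ) (hlam : 2 ≤ lam) (c R : ℕ → ℝ)
    (hc : ∀ i, c i = ∑ k ∈ Finset.Icc 1 i, lam ^ k)
    (hR : ∀ i, R i = c i + i) :
    ∀ i : ℕ,
      (c (i + 1) - c i) / (R (i + 1) - R i) = lam ^ (i + 1) / (lam ^ (i + 1) + 1) ∧
      (1 - (c (i + 1) - c i) / (R (i + 1) - R i)) * R (i + 1) =
        ((i : ℝ) + 1 + ∑ k ∈ Finset.Icc 1 (i + 1), lam ^ k) / (lam ^ (i + 1) + 1) ∧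
      (1 - (c (i + 1) - c i) / (R (i + 1) - R i)) * R (i + 1) ≤ 3 := by
  intro i
  have hpos : (0:ℝ) < lam ^ (i + 1) := pow_pos (by linarith) _
  have hd : (0:ℝ) < lam ^ (i + 1) + 1 := by linarith
  have hcd : c (i + 1) - c i = lam ^ (i + 1) := by
    rw [hc, hc, Finset.sum_Icc_succ_top (by omega : 1 ≤ i + 1)]
    ring
  have hRd : R (i + 1) - R i = lam ^ (i + 1) + 1 := by
    rw [hR, hR, hcd.symm]
    push_cast
    ring
  have h1 : (c (i + 1) - c i) / (R (i + 1) - R i) = lam ^ (i + 1) / (lam ^ (i + 1) + 1) := by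
    rw [hcd, hRd]
  have h2 : (1 - (c (i + 1) - c i) / (R (i + 1) - R i)) * R (i + 1) =
      ((i : ℝ) + 1 + ∑ k ∈ Finset.Icc 1 (i + 1), lam ^ k) / (lam ^ (i + 1) + 1) := by
    rw [h1, hR, hc]
    field_simp
    push_cast
    ring
  refine ⟨h1, h2, ?_⟩
  rw [h2]
  rw [div_le_iff₀ hd]
  have hsum := sum_geom_le lam hlam i
  have hi : (i : ℝ) + 1 ≤ lam ^ (i + 1) := by
    have h2p : ((i : ℝ) + 1) ≤ 2 ^ (i + 1) := by
      have := Nat.lt_two_pow_self (n := i + 1)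
      exact_mod_cast le_of_lt (by exact_mod_cast this)
    calc ((i:ℝ) + 1) ≤ 2 ^ (i + 1) := h2p
      _ ≤ lam ^ (i + 1) := pow_le_pow_left₀ (by norm_num) hlam _
  nlinarith
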